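/- Let H be any of the nonstandard face subgroups G^{36}_N, A^3G^3_N, A^3G^6_N. Then for every k ∈ α_{45}, pr^G_k(H) = s^{k−n}_k(A_{k−n}), and for every k ∈ {1,…,|α_3|}, pr^G_k(H) = s^{k+|α_{12}|}_k(A_{k+|α_{12}|}). Moreover, for H = A^{33}_N: pr^G_k(H) is the trivial subgroup for every k ∈ α_{45}, and pr^G_k(H) = s^{k+|α_{12}|}_k(A_{k+|α_{12}|}) for every k ∈ {1,…,|α_3|}. -/
import Mathlib


namespace SB

/-- `cc n p` is the 0-based boundary of the `p`-th label sequence: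
`cc n p = ⌈p·n/3⌉` for `p ≤ 3`, and `cc n p = n + ⌈(p-3)·n/3⌉` for `p ≥ 3`. -/
def cc (n p : ℕ) : ℕ := if p < 3 then (p * n + 2) / 3 else n + ((p - 3) * n + 2) / 3

/-- The 0-based label sequence `α_{p+1}` (paper's `α_1,…,α_6` for `p = 0,…,5`)
as a finite set of coordinates in `Fin (2n)`. -/
def alphaF (n p : ℕ) : Finset (Fin (2 * n)) :=
  Finset.univ.filter (fun x => cc n p ≤ x.val ∧ x.val < cc n (p + 1))

/-- The 0-based label sequence `α_{t+1}` (for `t < 3`) as a finite set of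
indices in `Fin n` (indexing the factors `A_j`). -/
def alphaN (n t : ℕ) : Finset (Fin n) :=
  Finset.univ.filter (fun x => cc n t ≤ x.val ∧ x.val < cc n (t + 1))

/-- Reduction of a natural number modulo `2n`, as an element of `Fin (2n)`. -/
def idx {n : ℕ} (hn : 0 < n) (k : ℕ) : Fin (2 * n) := ⟨k % (2 * n), Nat.mod_lt _ (by omega)⟩

/-- Reduction of a natural number modulo `n`, as an element of `Fin n`
(this implements the paper's `j*`). -/
def idxN {n : ℕ} (hn : 0 < n) (k : ℕ) : Fin n := ⟨k % n, Nat.mod_lt _ hn⟩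

/-- The set `Ȳ_i` of vectorized kernel generators: `y ∈ Y i` placed in
coordinate `i` with identity elsewhere. -/
def Ybar {n : ℕ} {G : Fin (2 * n) → Type} [∀ i, Group (G i)]
    (Y : ∀ i, Set (G i)) (i : Fin (2 * n)) : Set (∀ i', G i') :=
  Pi.mulSingle i '' (Y i)

/-- The set `Z̄^j_{i,k}` of vectorized section generators: for `b ∈ A j`, the
element with `s j i b` in coordinate `i`, `s j k b⁻¹` in coordinate `k`, and
identity elsewhere. -/
def Zbar {n : ℕ} {A : Fin n → Type} [∀ j, CommGroup (A j)]
    {G : Fin (2 * n) → Type} [∀ i, Group (G i)]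
    (s : ∀ (j : Fin n) (i : Fin (2 * n)), A j →* G i)
    (j : Fin n) (i k : Fin (2 * n)) : Set (∀ i', G i') :=
  Set.range (fun b : A j => Pi.mulSingle i (s j i b) * Pi.mulSingle k (s j k b⁻¹))

section Group3

variable {n : ℕ} {A : Fin n → Type} [∀ j, CommGroup (A j)]
  {G : Fin (2 * n) → Type} [∀ i, Group (G i)]

/-- The nonstandard face subgroup `G^{36}_N`. -/
def G36N (hn : 0 < n) (s : ∀ (j : Fin n) (i : Fin (2 * n)), A j →* G i)
    (Y : ∀ i, Set (G i)) : Subgroup (∀ i', G i') :=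
  Subgroup.closure (⋃ i ∈ (alphaF n 2 ∪ alphaF n 5),
    (Ybar Y i
      ∪ (⋃ j ∈ alphaF n 3 ∪ alphaF n 4, Zbar s (idxN hn j.val) i j)
      ∪ ⋃ j ∈ alphaF n 2, Zbar s (idxN hn j.val) i (idx hn (j.val - cc n 2))))

/-- The nonstandard face subgroup `A^3G^3_N`. -/
def A3G3N (hn : 0 < n) (s : ∀ (j : Fin n) (i : Fin (2 * n)), A j →* G i)
    (Y : ∀ i, Set (G i)) : Subgroup (∀ i', G i') :=
  Subgroup.closure (⋃ i ∈ alphaF n 2,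
    (Ybar Y i
      ∪ (⋃ j ∈ alphaF n 3 ∪ alphaF n 4 ∪ alphaF n 5, Zbar s (idxN hn j.val) i j)
      ∪ ⋃ j ∈ alphaF n 2, Zbar s (idxN hn j.val) i (idx hn (j.val - cc n 2))))

/-- The nonstandard face subgroup `A^3G^6_N`. -/
def A3G6N (hn : 0 < n) (s : ∀ (j : Fin n) (i : Fin (2 * n)), A j →* G i)
    (Y : ∀ i, Set (G i)) : Subgroup (∀ i', G i') :=
  Subgroup.closure (⋃ i ∈ alphaF n 5,
    (Ybar Y i
      ∪ (⋃ j ∈ alphaF n 3 ∪ alphaF n 4 ∪ alphaF n 5, Zbar s (idxN hn j.val) i j)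
      ∪ ⋃ j ∈ alphaF n 2, Zbar s (idxN hn j.val) i (idx hn (j.val - cc n 2))))

/-- The nonstandard linear-algebra face subgroup `A^{33}_N`. -/
def A33N (hn : 0 < n) (s : ∀ (j : Fin n) (i : Fin (2 * n)), A j →* G i) :
    Subgroup (∀ i', G i') :=
  Subgroup.closure (⋃ j ∈ alphaN n 2,
    (Zbar s j (idx hn j.val) (idx hn (j.val + n))
      ∪ Zbar s j (idx hn j.val) (idx hn (j.val - cc n 2))))

end Group3

section Aux

lemma cc2_eq (n : ℕ) : cc n 2 = (2 * n + 2) / 3 := by norm_num [cc]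

lemma mem_alphaF2 {n : ℕ} {x : Fin (2 * n)} :
    x ∈ alphaF n 2 ↔ cc n 2 ≤ x.val ∧ x.val < n := by
  simp [alphaF, cc]

lemma mem_alphaF5 {n : ℕ} {x : Fin (2 * n)} :
    x ∈ alphaF n 5 ↔ n + cc n 2 ≤ x.val ∧ x.val < 2 * n := by
  simp [alphaF, cc]; omega

lemma mem_alphaF34 {n : ℕ} {x : Fin (2 * n)} :
    x ∈ alphaF n 3 ∪ alphaF n 4 ↔ n ≤ x.val ∧ x.val < n + cc n 2 := by
  simp [alphaF, cc, Finset.mem_union]; omega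

lemma mem_alphaF345 {n : ℕ} {x : Fin (2 * n)} :
    x ∈ alphaF n 3 ∪ alphaF n 4 ∪ alphaF n 5 ↔ n ≤ x.val ∧ x.val < 2 * n := by
  simp [alphaF, cc, Finset.mem_union]; omega

lemma mem_alphaN2 {n : ℕ} {x : Fin n} :
    x ∈ alphaN n 2 ↔ cc n 2 ≤ x.val ∧ x.val < n := by
  simp [alphaN, cc]

lemma idx_val {n : ℕ} (hn : 0 < n) {m : ℕ} (h : m < 2 * n) : (idx hn m).val = m :=
  Nat.mod_eq_of_lt h

lemma idxN_val {n : ℕ} (hn : 0 < n) {m : ℕ} (h : m < n) : (idxN hn m).val = m :=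
  Nat.mod_eq_of_lt h

variable {n : ℕ} {A : Fin n → Type} [∀ j, CommGroup (A j)]
  {G : Fin (2 * n) → Type} [∀ i, Group (G i)]
  (s : ∀ (j : Fin n) (i : Fin (2 * n)), A j →* G i)

lemma z_apply_ne {j : Fin n} {i k' k : Fin (2 * n)} (b : A j)
    (h1 : k ≠ i) (h2 : k ≠ k') :
    (Pi.mulSingle i (s j i b) * Pi.mulSingle k' (s j k' b⁻¹)) k = 1 := by
  simp [Pi.mul_apply, Pi.mulSingle_eq_of_ne h1, Pi.mulSingle_eq_of_ne h2]

lemma z_apply_snd {j : Fin n} {i k : Fin (2 * n)} (b : A j) (h1 : k ≠ i) :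
    (Pi.mulSingle i (s j i b) * Pi.mulSingle k (s j k b⁻¹)) k = s j k b⁻¹ := by
  simp [Pi.mul_apply, Pi.mulSingle_eq_of_ne h1]

lemma cast_exists {j j' : Fin n} (h : j = j') (k : Fin (2 * n)) (x : A j) :
    ∃ b', s j k x = s j' k b' := by subst h; exact ⟨x, rfl⟩

lemma map_closure_eq_range {k : Fin (2 * n)} {j₀ : Fin n} (S : Set (∀ i, G i))
    (h1 : ∀ g ∈ S, g k = 1 ∨ ∃ b, g k = s j₀ k b)
    (h2 : ∀ a : A j₀, ∃ g ∈ S, g k = s j₀ k a) :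
    Subgroup.map (Pi.evalMonoidHom G k) (Subgroup.closure S) = (s j₀ k).range := by
  rw [MonoidHom.map_closure]
  apply le_antisymm
  · rw [Subgroup.closure_le]
    rintro x ⟨g, hg, rfl⟩
    show g k ∈ (s j₀ k).range
    rcases h1 g hg with h | ⟨b, hb⟩
    · rw [h]; exact one_mem _
    · rw [hb]; exact ⟨b, rfl⟩
  · rintro x ⟨a, rfl⟩
    obtain ⟨g, hg, hgk⟩ := h2 a
    have : (Pi.evalMonoidHom G k) g = s j₀ k a := hgk
    exact this ▸ Subgroup.subset_closure ⟨g, hg, rfl⟩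

lemma map_closure_eq_bot {k : Fin (2 * n)} (S : Set (∀ i, G i))
    (h : ∀ g ∈ S, g k = 1) :
    Subgroup.map (Pi.evalMonoidHom G k) (Subgroup.closure S) = ⊥ := by
  rw [MonoidHom.map_closure, eq_bot_iff, Subgroup.closure_le]
  rintro x ⟨g, hg, rfl⟩
  show g k ∈ (⊥ : Subgroup (G k))
  rw [Subgroup.mem_bot]
  exact h g hg

lemma main_case (hn3 : 3 ≤ n) (hn : 0 < n) (Y : ∀ i, Set (G i))
    (I J : Finset (Fin (2 * n)))
    (hI : ∀ i ∈ I, (cc n 2 ≤ i.val ∧ i.val < n) ∨ (n + cc n 2 ≤ i.val ∧ i.val < 2 * n))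
    (hIne : I.Nonempty)
    (hJ1 : ∀ j ∈ J, n ≤ j.val)
    (hJ2 : ∀ j : Fin (2 * n), n ≤ j.val → j.val < n + cc n 2 → j ∈ J) :
    (∀ k ∈ alphaF n 3 ∪ alphaF n 4,
      Subgroup.map (Pi.evalMonoidHom G k) (Subgroup.closure (⋃ i ∈ I,
        (Ybar Y i ∪ (⋃ j ∈ J, Zbar s (idxN hn j.val) i j)
          ∪ ⋃ j ∈ alphaF n 2, Zbar s (idxN hn j.val) i (idx hn (j.val - cc n 2)))))
        = (s (idxN hn k.val) k).range)
    ∧ (∀ k : Fin (2 * n), k.val < n - cc n 2 →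
      Subgroup.map (Pi.evalMonoidHom G k) (Subgroup.closure (⋃ i ∈ I,
        (Ybar Y i ∪ (⋃ j ∈ J, Zbar s (idxN hn j.val) i j)
          ∪ ⋃ j ∈ alphaF n 2, Zbar s (idxN hn j.val) i (idx hn (j.val - cc n 2)))))
        = (s (idxN hn (k.val + cc n 2)) k).range) := by
  have hc2 : cc n 2 = (2 * n + 2) / 3 := cc2_eq n
  constructor
  · intro k hk
    rw [mem_alphaF34] at hk
    apply map_closure_eq_range
    · intro g hg
      obtain ⟨i, hiI, hg⟩ := Set.mem_iUnion₂.mp hg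
      have hki : k ≠ i := by
        rcases hI i hiI with ⟨h, h'⟩ | ⟨h, h'⟩ <;>
          exact fun e => absurd (congrArg Fin.val e) (by omega)
      rcases hg with (hg | hg) | hg
      · obtain ⟨y, _, rfl⟩ := hg
        left; exact Pi.mulSingle_eq_of_ne hki _
      · obtain ⟨j, hjJ, b, rfl⟩ := Set.mem_iUnion₂.mp hg
        by_cases hjk : j = k
        · subst hjk
          right; exact ⟨b⁻¹, z_apply_snd s b hki⟩
        · left; exact z_apply_ne s b hki (Ne.symm hjk)
      · obtain ⟨j, hj2, b, rfl⟩ := Set.mem_iUnion₂.mp hg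
        rw [mem_alphaF2] at hj2
        left
        apply z_apply_ne s b hki
        rw [Ne, Fin.ext_iff, idx_val hn (by omega)]
        omega
    · intro a
      obtain ⟨i₀, hi₀⟩ := hIne
      have hki₀ : k ≠ i₀ := by
        rcases hI i₀ hi₀ with ⟨h, h'⟩ | ⟨h, h'⟩ <;>
          exact fun e => absurd (congrArg Fin.val e) (by omega)
      refine ⟨_, Set.mem_iUnion₂.mpr ⟨i₀, hi₀, Or.inl (Or.inr
        (Set.mem_iUnion₂.mpr ⟨k, hJ2 k (by omega) (by omega), ⟨a⁻¹, rfl⟩⟩))⟩, ?_⟩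
      beta_reduce
      rw [z_apply_snd s a⁻¹ hki₀, inv_inv]
  · intro k hk
    apply map_closure_eq_range
    · intro g hg
      obtain ⟨i, hiI, hg⟩ := Set.mem_iUnion₂.mp hg
      have hki : k ≠ i := by
        rcases hI i hiI with ⟨h, h'⟩ | ⟨h, h'⟩ <;>
          exact fun e => absurd (congrArg Fin.val e) (by omega)
      rcases hg with (hg | hg) | hg
      · obtain ⟨y, _, rfl⟩ := hg
        left; exact Pi.mulSingle_eq_of_ne hki _
      · obtain ⟨j, hjJ, b, rfl⟩ := Set.mem_iUnion₂.mp hg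
        have := hJ1 j hjJ
        left
        apply z_apply_ne s b hki
        exact fun e => absurd (congrArg Fin.val e) (by omega)
      · obtain ⟨j, hj2, b, rfl⟩ := Set.mem_iUnion₂.mp hg
        rw [mem_alphaF2] at hj2
        by_cases hc : j.val = cc n 2 + k.val
        · right
          have hco : idx hn (j.val - cc n 2) = k := by
            rw [Fin.ext_iff, idx_val hn (by omega)]; omega
          have hj0 : idxN hn j.val = idxN hn (k.val + cc n 2) := by
            rw [Fin.ext_iff, idxN_val hn (by omega), idxN_val hn (by omega)]; omega
          rw [hco]; beta_reduce
          rw [z_apply_snd s b hki]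
          exact cast_exists s hj0 k b⁻¹
        · left
          apply z_apply_ne s b hki
          rw [Ne, Fin.ext_iff, idx_val hn (by omega)]
          omega
    · intro a
      obtain ⟨i₀, hi₀⟩ := hIne
      have hki₀ : k ≠ i₀ := by
        rcases hI i₀ hi₀ with ⟨h, h'⟩ | ⟨h, h'⟩ <;>
          exact fun e => absurd (congrArg Fin.val e) (by omega)
      have hjmem : (⟨k.val + cc n 2, by omega⟩ : Fin (2 * n)) ∈ alphaF n 2 :=
        mem_alphaF2.mpr ⟨by show cc n 2 ≤ k.val + cc n 2; omega,
          by show k.val + cc n 2 < n; omega⟩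
      refine ⟨_, Set.mem_iUnion₂.mpr ⟨i₀, hi₀, Or.inr
        (Set.mem_iUnion₂.mpr ⟨⟨k.val + cc n 2, by omega⟩, hjmem, ⟨a⁻¹, rfl⟩⟩)⟩, ?_⟩
      show (Pi.mulSingle i₀ (s (idxN hn (k.val + cc n 2)) i₀ a⁻¹) *
        Pi.mulSingle (idx hn (k.val + cc n 2 - cc n 2))
          (s (idxN hn (k.val + cc n 2)) (idx hn (k.val + cc n 2 - cc n 2)) a⁻¹⁻¹)) k
        = s (idxN hn (k.val + cc n 2)) k a
      have hco : idx hn (k.val + cc n 2 - cc n 2) = k := by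
        rw [Fin.ext_iff, idx_val hn (by omega)]; omega
      rw [hco, z_apply_snd s a⁻¹ hki₀, inv_inv]

lemma a33_case (hn3 : 3 ≤ n) (hn : 0 < n) :
    (∀ k ∈ alphaF n 3 ∪ alphaF n 4,
      Subgroup.map (Pi.evalMonoidHom G k) (A33N hn s) = ⊥)
    ∧ (∀ k : Fin (2 * n), k.val < n - cc n 2 →
      Subgroup.map (Pi.evalMonoidHom G k) (A33N hn s)
        = (s (idxN hn (k.val + cc n 2)) k).range) := by
  have hc2 : cc n 2 = (2 * n + 2) / 3 := cc2_eq n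
  unfold A33N
  constructor
  · intro k hk
    rw [mem_alphaF34] at hk
    apply map_closure_eq_bot
    intro g hg
    obtain ⟨j, hj2, hg⟩ := Set.mem_iUnion₂.mp hg
    rw [mem_alphaN2] at hj2
    have hkj : k ≠ idx hn j.val := by
      rw [Ne, Fin.ext_iff, idx_val hn (by omega)]; omega
    rcases hg with ⟨b, rfl⟩ | ⟨b, rfl⟩
    · apply z_apply_ne s b hkj
      rw [Ne, Fin.ext_iff, idx_val hn (by omega)]; omega
    · apply z_apply_ne s b hkj
      rw [Ne, Fin.ext_iff, idx_val hn (by omega)]; omega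
  · intro k hk
    apply map_closure_eq_range
    · intro g hg
      obtain ⟨j, hj2, hg⟩ := Set.mem_iUnion₂.mp hg
      rw [mem_alphaN2] at hj2
      have hkj : k ≠ idx hn j.val := by
        rw [Ne, Fin.ext_iff, idx_val hn (by omega)]; omega
      rcases hg with ⟨b, rfl⟩ | ⟨b, rfl⟩
      · left
        apply z_apply_ne s b hkj
        rw [Ne, Fin.ext_iff, idx_val hn (by omega)]; omega
      · by_cases hc : j.val = cc n 2 + k.val
        · right
          have hco : idx hn (j.val - cc n 2) = k := by
            rw [Fin.ext_iff, idx_val hn (by omega)]; omega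
          have hj0 : j = idxN hn (k.val + cc n 2) := by
            rw [Fin.ext_iff, idxN_val hn (by omega)]; omega
          rw [hco]; beta_reduce
          rw [z_apply_snd s b hkj]
          exact cast_exists s hj0 k b⁻¹
        · left
          apply z_apply_ne s b hkj
          rw [Ne, Fin.ext_iff, idx_val hn (by omega)]; omega
    · intro a
      have hjmem : idxN hn (k.val + cc n 2) ∈ alphaN n 2 := by
        rw [mem_alphaN2, idxN_val hn (by omega)]; omega
      refine ⟨_, Set.mem_iUnion₂.mpr ⟨idxN hn (k.val + cc n 2), hjmem, Or.inr ⟨a⁻¹, rfl⟩⟩, ?_⟩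
      have hkj : k ≠ idx hn (idxN hn (k.val + cc n 2)).val := by
        rw [Ne, Fin.ext_iff, idxN_val hn (by omega), idx_val hn (by omega)]; omega
      have hco : idx hn ((idxN hn (k.val + cc n 2)).val - cc n 2) = k := by
        rw [Fin.ext_iff, idxN_val hn (by omega), idx_val hn (by omega)]; omega
      beta_reduce
      rw [hco, z_apply_snd s a⁻¹ hkj, inv_inv]

end Aux

theorem stmt_13
    (n : ℕ) (hn : 3 ≤ n)
    (A : Fin n → Type) [∀ j, CommGroup (A j)] [∀ j, Nontrivial (A j)]
    [∀ j, Module.Free ℤ (Additive (A j))] [∀ j, Module.Finite ℤ (Additive (A j))]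
    (G : Fin (2 * n) → Type) [∀ i, Group (G i)]
    (φ : ∀ i, G i →* (∀ j, A j)) (hφ : ∀ i, Function.Surjective (φ i))
    (s : ∀ (j : Fin n) (i : Fin (2 * n)), A j →* G i)
    (hs : ∀ j i a, φ i (s j i a) j = a)
    (Φ : (∀ i, G i) →* (∀ j, A j)) (hΦ : ∀ g, Φ g = ∏ i, φ i (g i))
    (Y : ∀ i, Set (G i)) (hYfin : ∀ i, (Y i).Finite)
    (hYker : ∀ i, ∀ y ∈ Y i, φ i y = 1)
    (hYgen : ∀ i, Subgroup.closure (Y i ∪ ⋃ j, Set.range (s j i)) = ⊤)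
    :
    (∀ H ∈ ({G36N (by omega : 0 < n) s Y, A3G3N (by omega : 0 < n) s Y,
              A3G6N (by omega : 0 < n) s Y} : Set (Subgroup (∀ i, G i))),
        (∀ k ∈ alphaF n 3 ∪ alphaF n 4,
          Subgroup.map (Pi.evalMonoidHom G k) H
            = MonoidHom.range (s (idxN (by omega : 0 < n) k.val) k)) ∧
        (∀ k : Fin (2 * n), k.val < n - cc n 2 →
          Subgroup.map (Pi.evalMonoidHom G k) H
            = MonoidHom.range (s (idxN (by omega : 0 < n) (k.val + cc n 2)) k)))
      ∧ (∀ k ∈ alphaF n 3 ∪ alphaF n 4,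
          Subgroup.map (Pi.evalMonoidHom G k) (A33N (by omega : 0 < n) s) = ⊥)
      ∧ (∀ k : Fin (2 * n), k.val < n - cc n 2 →
          Subgroup.map (Pi.evalMonoidHom G k) (A33N (by omega : 0 < n) s)
            = MonoidHom.range (s (idxN (by omega : 0 < n) (k.val + cc n 2)) k)) := by
  have hn0 : 0 < n := by omega
  have hc2 : cc n 2 = (2 * n + 2) / 3 := cc2_eq n
  have hI2 : ∀ i ∈ alphaF n 2,
      (cc n 2 ≤ i.val ∧ i.val < n) ∨ (n + cc n 2 ≤ i.val ∧ i.val < 2 * n) := by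
    intro i hi; rw [mem_alphaF2] at hi; exact Or.inl hi
  have hI5 : ∀ i ∈ alphaF n 5,
      (cc n 2 ≤ i.val ∧ i.val < n) ∨ (n + cc n 2 ≤ i.val ∧ i.val < 2 * n) := by
    intro i hi; rw [mem_alphaF5] at hi; exact Or.inr hi
  have hne2 : (alphaF n 2).Nonempty :=
    ⟨⟨cc n 2, by omega⟩, mem_alphaF2.mpr ⟨by show cc n 2 ≤ cc n 2; omega,
      by show cc n 2 < n; omega⟩⟩
  have hne5 : (alphaF n 5).Nonempty :=
    ⟨⟨n + cc n 2, by omega⟩, mem_alphaF5.mpr ⟨by show n + cc n 2 ≤ n + cc n 2; omega,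
      by show n + cc n 2 < 2 * n; omega⟩⟩
  refine ⟨?_, ?_, ?_⟩
  · intro H hH
    simp only [Set.mem_insert_iff, Set.mem_singleton_iff] at hH
    rcases hH with rfl | rfl | rfl
    · exact main_case s hn hn0 Y (alphaF n 2 ∪ alphaF n 5) (alphaF n 3 ∪ alphaF n 4)
        (by intro i hi; rcases Finset.mem_union.mp hi with h | h
            exacts [hI2 i h, hI5 i h])
        (hne2.mono Finset.subset_union_left)
        (fun j hj => (mem_alphaF34.mp hj).1)
        (fun j h1 h2 => mem_alphaF34.mpr ⟨h1, h2⟩)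
    · exact main_case s hn hn0 Y (alphaF n 2) (alphaF n 3 ∪ alphaF n 4 ∪ alphaF n 5)
        hI2 hne2
        (fun j hj => (mem_alphaF345.mp hj).1)
        (fun j h1 h2 => mem_alphaF345.mpr ⟨h1, by omega⟩)
    · exact main_case s hn hn0 Y (alphaF n 5) (alphaF n 3 ∪ alphaF n 4 ∪ alphaF n 5)
        hI5 hne5
        (fun j hj => (mem_alphaF345.mp hj).1)
        (fun j h1 h2 => mem_alphaF345.mpr ⟨h1, by omega⟩)
  · exact (a33_case s hn hn0).1
  · exact (a33_case s hn hn0).2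

end SB
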